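/- arXiv:2206.07688 — 2 statements merged into one kernel-verified Lean document; each statement's English description precedes it below -/
import Mathlib

section
/- For any summable weighted graph (G,m) whose vertex set has at least two elements, one has κ(G,m) ≥ 0. Moreover, if (G,m) is connected, then κ(G,m) = 0 if and only if G is bipartite. -/
open MeasureTheory

/-- A summable weighted graph on a vertex set `V`. -/
structure SummableWeightedGraph (V : Type*) where
  m : V → V → ℝ
  symm : ∀ u v, m u v = m v u
  nonneg : ∀ u v, 0 ≤ m u v
  loopless : ∀ v, m v v = 0
  summable : Summable fun p : V × V => m p.1 p.2
  noIsolated : ∀ v, 0 < ∑' u, m v u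

namespace SummableWeightedGraph

variable {V : Type*} (G : SummableWeightedGraph V)

/-- The weight of a vertex. -/
noncomputable def deg (v : V) : ℝ := ∑' u, G.m v u

/-- The weight of a set of vertices. -/
noncomputable def setWeight (S : Set V) : ℝ := ∑' v : S, G.deg v

/-- The weight of the boundary of a set of vertices. -/
noncomputable def boundaryWeight (S : Set V) : ℝ :=
  ∑' p : ↥S × ↥Sᶜ, G.m p.1 p.2

/-- The Cheeger constant. -/
noncomputable def cheegerConst : ℝ :=
  sInf { r : ℝ | ∃ S : Set V, S.Nonempty ∧ G.setWeight S ≤ G.setWeight Sᶜ ∧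
    r = G.boundaryWeight S / G.setWeight S }

/-- The weighted counting measure on vertices. -/
noncomputable def measure [MeasurableSpace V] : Measure V :=
  Measure.sum fun v => ENNReal.ofReal (G.deg v) • Measure.dirac v

/-- The normalised Laplacian, characterised by its pointwise formula. -/
def IsLaplacian [MeasurableSpace V]
    (L : Lp ℝ 2 G.measure →L[ℝ] Lp ℝ 2 G.measure) : Prop :=
  ∀ f : Lp ℝ 2 G.measure, ∀ᵐ v ∂G.measure,
    L f v = f v - (G.deg v)⁻¹ * ∑' u, G.m v u * f u

end SummableWeightedGraph

namespace SummableWeightedGraph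

variable {V : Type*} (G : SummableWeightedGraph V)

/-- `p_S(v)`, the probability that the random walk moves from `v` into `S` in one step. -/
noncomputable def pProb (S : Set V) (v : V) : ℝ := (∑' u : S, G.m v u) / G.deg v

/-- `κ(A,B)` for a partition `V = A ⊔ B` into nonempty sets. -/
noncomputable def kappaPair (A B : Set V) : ℝ :=
  max (⨆ v : A, G.pProb A v) (⨆ w : B, G.pProb B w)

/-- The invariant `κ(G,m)`. -/
noncomputable def kappa : ℝ :=
  sInf { r : ℝ | ∃ A B : Set V, A.Nonempty ∧ B.Nonempty ∧ Disjoint A B ∧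
    A ∪ B = Set.univ ∧ r = G.kappaPair A B }

end SummableWeightedGraph

namespace SummableWeightedGraph

variable {V : Type*} (G : SummableWeightedGraph V)

def adjGraph : SimpleGraph V where
  Adj a b := 0 < G.m a b
  symm := ⟨by intro a b h; rwa [G.symm b a]⟩
  loopless := ⟨by intro a h; simp [G.loopless] at h⟩

lemma deg_pos (v : V) : 0 < G.deg v := G.noIsolated v

lemma summable_row (v : V) : Summable fun u => G.m v u := G.summable.prod_factor v

lemma pProb_nonneg (S : Set V) (v : V) : 0 ≤ G.pProb S v :=
  div_nonneg (tsum_nonneg fun u => G.nonneg v u) (G.deg_pos v).le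

lemma pProb_le_one (S : Set V) (v : V) : G.pProb S v ≤ 1 := by
  rw [pProb, div_le_one (G.deg_pos v)]
  exact Summable.tsum_subtype_le (fun u => G.m v u) S (fun u => G.nonneg v u) (G.summable_row v)

lemma le_pProb (S : Set V) (a b : V) (hb : b ∈ S) :
    G.m a b / G.deg a ≤ G.pProb S a := by
  rw [pProb, div_le_div_iff_of_pos_right (G.deg_pos a)]
  exact Summable.le_tsum ((G.summable_row a).subtype S) ⟨b, hb⟩ (fun j _ => G.nonneg a j.1)

lemma pProb_le_kappaPair_left (A B : Set V) (a : V) (ha : a ∈ A) :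
    G.pProb A a ≤ G.kappaPair A B :=
  le_trans (le_ciSup (f := fun v : A => G.pProb A ↑v) ⟨1, by rintro _ ⟨v, rfl⟩; exact G.pProb_le_one A v⟩ (⟨a, ha⟩ : A))
    (le_max_left _ _)

lemma pProb_le_kappaPair_right (A B : Set V) (b : V) (hb : b ∈ B) :
    G.pProb B b ≤ G.kappaPair A B :=
  le_trans (le_ciSup (f := fun v : B => G.pProb B ↑v) ⟨1, by rintro _ ⟨v, rfl⟩; exact G.pProb_le_one B v⟩ (⟨b, hb⟩ : B))
    (le_max_right _ _)

lemma walk_parity {W : Type*} {H : SimpleGraph W} (A : Set W) {u v : W} (w : H.Walk u v)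
    (hd : ∀ d ∈ w.darts, ¬(d.toProd.1 ∈ A ↔ d.toProd.2 ∈ A)) :
    ((u ∈ A) ↔ (v ∈ A)) ↔ Even w.length := by
  induction w with
  | nil => simp
  | @cons a x c h p ih =>
    simp only [SimpleGraph.Walk.darts_cons, List.mem_cons, forall_eq_or_imp] at hd
    have h2 := ih hd.2
    have h1 := hd.1
    rw [SimpleGraph.Walk.length_cons, Nat.even_add_one, ← h2]
    tauto

lemma exists_dart {W : Type*} {H : SimpleGraph W} (A : Set W) {v0 : W} (w : H.Walk v0 v0)
    (hodd : Odd w.length) :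
    ∃ d ∈ w.darts, (d.toProd.1 ∈ A ↔ d.toProd.2 ∈ A) := by
  by_contra hc
  have hc' : ∀ d ∈ w.darts, ¬(d.toProd.1 ∈ A ↔ d.toProd.2 ∈ A) :=
    fun d hd hP => hc ⟨d, hd, hP⟩
  have h := walk_parity A w hc'
  exact (Nat.not_even_iff_odd.mpr hodd) (h.mp Iff.rfl)

lemma exists_pos_lowerbound {v0 : V} (w : G.adjGraph.Walk v0 v0) (hodd : Odd w.length) :
    ∃ c > (0:ℝ), ∀ A B : Set V, Disjoint A B → A ∪ B = Set.univ → c ≤ G.kappaPair A B := by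
  classical
  have hne : w.darts ≠ [] := by
    intro h
    have hl := SimpleGraph.Walk.length_darts w
    rw [h] at hl
    rcases hodd with ⟨k, hk⟩
    simp at hl
    omega
  obtain ⟨d0, hd0⟩ := List.exists_mem_of_ne_nil _ hne
  have hsne : w.darts.toFinset.Nonempty := ⟨d0, List.mem_toFinset.mpr hd0⟩
  set f : G.adjGraph.Dart → ℝ := fun d => G.m d.toProd.1 d.toProd.2 / G.deg d.toProd.1 with hf
  refine ⟨w.darts.toFinset.inf' hsne f, ?_, ?_⟩
  · rw [gt_iff_lt, Finset.lt_inf'_iff]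
    intro d hd
    exact div_pos d.adj (G.deg_pos _)
  · intro A B hdis huniv
    obtain ⟨d, hdmem, hdiff⟩ := exists_dart A w hodd
    have hle : w.darts.toFinset.inf' hsne f ≤ f d :=
      Finset.inf'_le f (List.mem_toFinset.mpr hdmem)
    by_cases h1 : d.toProd.1 ∈ A
    · exact hle.trans ((G.le_pProb A _ _ (hdiff.mp h1)).trans
        (G.pProb_le_kappaPair_left A B _ h1))
    · have h1B : d.toProd.1 ∈ B := by
        have : d.toProd.1 ∈ A ∪ B := huniv ▸ Set.mem_univ _
        exact this.resolve_left h1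
      have h2B : d.toProd.2 ∈ B := by
        have h2 : d.toProd.2 ∉ A := fun h => h1 (hdiff.mpr h)
        have : d.toProd.2 ∈ A ∪ B := huniv ▸ Set.mem_univ _
        exact this.resolve_left h2
      exact hle.trans ((G.le_pProb B _ _ h2B).trans
        (G.pProb_le_kappaPair_right A B _ h1B))

lemma sup_pProb_zero (S : Set V) (hS : S.Nonempty)
    (h : ∀ u ∈ S, ∀ v ∈ S, G.m u v = 0) :
    (⨆ v : S, G.pProb S ↑v) = 0 := by
  haveI : Nonempty ↥S := hS.to_subtype
  have h0 : ∀ v : S, G.pProb S ↑v = 0 := by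
    rintro ⟨v, hv⟩
    rw [pProb]
    have hz : (∑' u : S, G.m v u) = 0 := by
      have : ∀ u : S, G.m v ↑u = 0 := fun ⟨u, hu⟩ => h v hv u hu
      rw [tsum_congr this, tsum_zero]
    rw [hz, zero_div]
  calc (⨆ v : S, G.pProb S ↑v) = ⨆ _ : S, (0:ℝ) := iSup_congr h0
    _ = 0 := ciSup_const

end SummableWeightedGraph

open SummableWeightedGraph in
/-- `κ(G,m) ≥ 0`; and if `(G,m)` is connected, then `κ(G,m) = 0` iff
`G` is bipartite. -/
theorem kappa_nonneg_and_eq_zero_iff_bipartite {V : Type*} [Countable V] [Nontrivial V]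
    (G : SummableWeightedGraph V) :
    0 ≤ G.kappa ∧
    ((∀ u v : V, Relation.ReflTransGen (fun a b => 0 < G.m a b) u v) →
      (G.kappa = 0 ↔ ∃ A : Set V,
        (∀ u ∈ A, ∀ v ∈ A, G.m u v = 0) ∧ (∀ u ∈ Aᶜ, ∀ v ∈ Aᶜ, G.m u v = 0))) := by
  classical
  set K := { r : ℝ | ∃ A B : Set V, A.Nonempty ∧ B.Nonempty ∧ Disjoint A B ∧
    A ∪ B = Set.univ ∧ r = G.kappaPair A B } with hK
  have hlb : ∀ r ∈ K, 0 ≤ r := by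
    rintro r ⟨A, B, hA, hB, -, -, rfl⟩
    obtain ⟨a, ha⟩ := hA
    exact le_trans (G.pProb_nonneg A a) (G.pProb_le_kappaPair_left A B a ha)
  have hKne : K.Nonempty := by
    obtain ⟨u, v, huv⟩ := exists_pair_ne V
    exact ⟨G.kappaPair {u} {u}ᶜ, {u}, {u}ᶜ, ⟨u, rfl⟩, ⟨v, huv.symm⟩,
      disjoint_compl_right, Set.union_compl_self _, rfl⟩
  have h1 : 0 ≤ G.kappa := Real.sInf_nonneg hlb
  refine ⟨h1, fun hconn => ⟨fun hk0 => ?_, fun hbip => ?_⟩⟩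
  · -- κ = 0 → bipartite
    by_contra hnb
    obtain ⟨v0⟩ : Nonempty V := inferInstance
    set A0 : Set V := {v | ∃ w : G.adjGraph.Walk v0 v, Even w.length} with hA0
    -- produce an odd closed walk
    have hodd : ∃ w : G.adjGraph.Walk v0 v0, Odd w.length := by
      have hnA : ¬((∀ u ∈ A0, ∀ v ∈ A0, G.m u v = 0) ∧
          (∀ u ∈ A0ᶜ, ∀ v ∈ A0ᶜ, G.m u v = 0)) := fun h => hnb ⟨A0, h⟩
      rcases not_and_or.mp hnA with hP | hQ
      · push_neg at hP
        obtain ⟨u, hu, v, hv, hmne⟩ := hP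
        have hadj : G.adjGraph.Adj u v := lt_of_le_of_ne (G.nonneg u v) (Ne.symm hmne)
        obtain ⟨wu, heu⟩ := hu
        obtain ⟨wv, hev⟩ := hv
        refine ⟨wu.append (SimpleGraph.Walk.cons hadj wv.reverse), ?_⟩
        rw [SimpleGraph.Walk.length_append, SimpleGraph.Walk.length_cons,
          SimpleGraph.Walk.length_reverse]
        rcases heu with ⟨a, ha⟩; rcases hev with ⟨b, hb⟩
        exact ⟨a + b, by omega⟩
      · push_neg at hQ
        obtain ⟨u, hu, v, hv, hmne⟩ := hQ
        have hadj : G.adjGraph.Adj u v := lt_of_le_of_ne (G.nonneg u v) (Ne.symm hmne)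
        obtain ⟨wu⟩ : G.adjGraph.Reachable v0 u :=
          (SimpleGraph.reachable_iff_reflTransGen _ _).mpr (hconn v0 u)
        obtain ⟨wv⟩ : G.adjGraph.Reachable v0 v :=
          (SimpleGraph.reachable_iff_reflTransGen _ _).mpr (hconn v0 v)
        have hou : ¬Even wu.length := fun h => hu ⟨wu, h⟩
        have hov : ¬Even wv.length := fun h => hv ⟨wv, h⟩
        refine ⟨wu.append (SimpleGraph.Walk.cons hadj wv.reverse), ?_⟩
        rw [SimpleGraph.Walk.length_append, SimpleGraph.Walk.length_cons,
          SimpleGraph.Walk.length_reverse]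
        rw [Nat.not_even_iff_odd] at hou hov
        rcases hou with ⟨a, ha⟩; rcases hov with ⟨b, hb⟩
        exact ⟨a + b + 1, by omega⟩
    obtain ⟨w, hw⟩ := hodd
    obtain ⟨c, hc, hcle⟩ := G.exists_pos_lowerbound w hw
    have : c ≤ G.kappa := by
      refine le_csInf hKne ?_
      rintro r ⟨A, B, -, -, hd, hun, rfl⟩
      exact hcle A B hd hun
    rw [hk0] at this
    linarith
  · -- bipartite → κ = 0
    obtain ⟨A, hPA, hQA⟩ := hbip
    obtain ⟨v0⟩ : Nonempty V := inferInstance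
    have hex : ∃ u, 0 < G.m v0 u := by
      by_contra h
      push_neg at h
      have hz : ∀ u, G.m v0 u = 0 := fun u => le_antisymm (h u) (G.nonneg v0 u)
      have : G.deg v0 = 0 := by
        rw [SummableWeightedGraph.deg, tsum_congr hz, tsum_zero]
      exact absurd this (G.deg_pos v0).ne'
    obtain ⟨u0, hu0⟩ := hex
    have hpart : A.Nonempty ∧ Aᶜ.Nonempty := by
      by_cases hv : v0 ∈ A
      · refine ⟨⟨v0, hv⟩, ⟨u0, fun h => hu0.ne' (hPA v0 hv u0 h)⟩⟩
      · refine ⟨⟨u0, ?_⟩, ⟨v0, hv⟩⟩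
        by_contra h
        exact hu0.ne' (hQA v0 hv u0 h)
    have hkp : G.kappaPair A Aᶜ = 0 := by
      rw [SummableWeightedGraph.kappaPair, G.sup_pProb_zero A hpart.1 hPA,
        G.sup_pProb_zero Aᶜ hpart.2 hQA, max_self]
    have hle : G.kappa ≤ 0 := by
      rw [← hkp]
      exact csInf_le ⟨0, hlb⟩ ⟨A, Aᶜ, hpart.1, hpart.2, disjoint_compl_right,
        Set.union_compl_self _, rfl⟩
    linarith
end

section
/- For every summable weighted graph (G,m), the Cheeger constant h(G,m) equals the infimum of the Cheeger ratios h(S) taken over all Cheeger sets, i.e. over all nonempty sets S ⊆ V with m(S) ≤ m(V ∖ S) such that the induced subgraph on S is connected (any two vertices of S are joined by a finite path of edges of positive weight all of whose vertices lie in S). -/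
open MeasureTheory

namespace SummableWeightedGraph

/-- The induced subgraph on `S` is connected: any two vertices of `S` are joined by a
finite path of edges of positive weight all of whose vertices lie in `S`. -/
def ConnectedIn {V : Type*} (G : SummableWeightedGraph V) (S : Set V) : Prop :=
  ∀ u ∈ S, ∀ v ∈ S, Relation.ReflTransGen (fun a b => b ∈ S ∧ 0 < G.m a b) u v

end SummableWeightedGraph

namespace SummableWeightedGraph

variable {V : Type*} (G : SummableWeightedGraph V)

/-- Edge weight as an extended nonnegative real. -/
noncomputable def ee (u v : V) : ENNReal := ENNReal.ofReal (G.m u v)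

/-- Vertex weight as an extended nonnegative real. -/
noncomputable def DD (v : V) : ENNReal := ∑' u, G.ee v u

/-- Set weight as an extended nonnegative real. -/
noncomputable def WW (S : Set V) : ENNReal := ∑' v : S, G.DD v

/-- Boundary weight as an extended nonnegative real. -/
noncomputable def BB (S : Set V) : ENNReal := ∑' p : ↥S × ↥Sᶜ, G.ee p.1 p.2

/-- Total weight. -/
noncomputable def TT : ENNReal := ∑' p : V × V, G.ee p.1 p.2

lemma ee_ne_top (u v : V) : G.ee u v ≠ ⊤ := ENNReal.ofReal_ne_top

lemma DD_eq (v : V) : G.DD v = ENNReal.ofReal (G.deg v) :=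
  (ENNReal.ofReal_tsum_of_nonneg (fun u => G.nonneg v u) (G.summable_row v)).symm

lemma DD_ne_top (v : V) : G.DD v ≠ ⊤ := by
  rw [G.DD_eq]; exact ENNReal.ofReal_ne_top

lemma DD_pos (v : V) : 0 < G.DD v := by
  rw [G.DD_eq]; exact ENNReal.ofReal_pos.mpr (G.noIsolated v)

lemma deg_nonneg (v : V) : 0 ≤ G.deg v := tsum_nonneg fun u => G.nonneg v u

lemma deg_eq_toReal (v : V) : G.deg v = (G.DD v).toReal := by
  rw [G.DD_eq, ENNReal.toReal_ofReal (G.deg_nonneg v)]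

lemma TT_ne_top : G.TT ≠ ⊤ := by
  have : G.TT = ENNReal.ofReal (∑' p : V × V, G.m p.1 p.2) := by
    rw [ENNReal.ofReal_tsum_of_nonneg (f := fun p : V × V => G.m p.1 p.2) (fun p => G.nonneg p.1 p.2) G.summable]; rfl
  rw [this]; exact ENNReal.ofReal_ne_top

lemma WW_le_TT (S : Set V) : G.WW S ≤ G.TT := by
  have h2 : G.TT = ∑' v : V, G.DD v := ENNReal.tsum_prod'
  rw [h2]
  exact ENNReal.tsum_comp_le_tsum_of_injective Subtype.val_injective G.DD

lemma WW_ne_top (S : Set V) : G.WW S ≠ ⊤ := ne_top_of_le_ne_top G.TT_ne_top (G.WW_le_TT S)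

lemma BB_le_TT (S : Set V) : G.BB S ≤ G.TT :=
  ENNReal.tsum_comp_le_tsum_of_injective
    (Subtype.val_injective.prodMap Subtype.val_injective)
    (fun p : V × V => G.ee p.1 p.2)

lemma BB_ne_top (S : Set V) : G.BB S ≠ ⊤ := ne_top_of_le_ne_top G.TT_ne_top (G.BB_le_TT S)

lemma WW_mono {S T : Set V} (h : S ⊆ T) : G.WW S ≤ G.WW T :=
  ENNReal.tsum_mono_subtype G.DD h

lemma WW_pos {S : Set V} (hS : S.Nonempty) : 0 < G.WW S := by
  obtain ⟨v, hv⟩ := hS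
  exact lt_of_lt_of_le (G.DD_pos v) (ENNReal.le_tsum (⟨v, hv⟩ : S))

lemma setWeight_eq_toReal (S : Set V) : G.setWeight S = (G.WW S).toReal := by
  rw [setWeight, WW, ENNReal.tsum_toReal_eq (fun v => G.DD_ne_top _)]
  exact tsum_congr fun v => G.deg_eq_toReal v.1

lemma boundaryWeight_eq_toReal (S : Set V) :
    G.boundaryWeight S = (G.BB S).toReal := by
  rw [boundaryWeight, BB,
    ENNReal.tsum_toReal_eq (fun p : ↥S × ↥Sᶜ => G.ee_ne_top p.1 p.2)]
  exact tsum_congr fun p => (ENNReal.toReal_ofReal (G.nonneg _ _)).symm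

lemma setWeight_nonneg (S : Set V) : 0 ≤ G.setWeight S :=
  tsum_nonneg fun v => G.deg_nonneg v.1

lemma boundaryWeight_nonneg (S : Set V) : 0 ≤ G.boundaryWeight S :=
  tsum_nonneg fun p => G.nonneg _ _

lemma setWeight_pos {S : Set V} (hS : S.Nonempty) : 0 < G.setWeight S := by
  rw [setWeight_eq_toReal]
  exact ENNReal.toReal_pos (G.WW_pos hS).ne' (G.WW_ne_top S)

lemma setWeight_mono {S T : Set V} (h : S ⊆ T) : G.setWeight S ≤ G.setWeight T := by
  rw [setWeight_eq_toReal, setWeight_eq_toReal]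
  exact ENNReal.toReal_mono (G.WW_ne_top T) (G.WW_mono h)

end SummableWeightedGraph

namespace SummableWeightedGraph

variable {V : Type*} (G : SummableWeightedGraph V)

lemma exists_connected_le (S : Set V) (hS : S.Nonempty)
    (hbal : G.setWeight S ≤ G.setWeight Sᶜ) :
    ∃ C : Set V, C.Nonempty ∧ G.setWeight C ≤ G.setWeight Cᶜ ∧ G.ConnectedIn C ∧
      G.boundaryWeight C / G.setWeight C ≤ G.boundaryWeight S / G.setWeight S := by
  classical
  let stp : V → V → Prop := fun a b => b ∈ S ∧ 0 < G.m a b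
  have key : ∀ {u v : V}, u ∈ S → Relation.ReflTransGen stp u v →
      v ∈ S ∧ Relation.ReflTransGen stp v u := by
    intro u v hu h
    induction h with
    | refl => exact ⟨hu, Relation.ReflTransGen.refl⟩
    | @tail b c h1 h2 ih =>
      refine ⟨h2.1, Relation.ReflTransGen.trans
        (Relation.ReflTransGen.single ⟨ih.1, ?_⟩) ih.2⟩
      rw [G.symm]; exact h2.2
  let r : ↥S → ↥S → Prop := fun x y => Relation.ReflTransGen stp x.1 y.1
  have requiv : Equivalence r :=
    ⟨fun x => Relation.ReflTransGen.refl,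
     fun {x y} h => (key x.2 h).2,
     fun {x y z} h1 h2 => h1.trans h2⟩
  let Q := Quot r
  let Cs : Q → Set V := fun q => {v : V | ∃ h : v ∈ S, Quot.mk r ⟨v, h⟩ = q}
  have hCsub : ∀ q, Cs q ⊆ S := fun q v hv => hv.choose
  have hCne : ∀ q : Q, (Cs q).Nonempty := by
    intro q
    obtain ⟨x, hx⟩ := Quot.exists_rep q
    exact ⟨x.1, x.2, hx⟩
  have decomp : ∀ g : V → ENNReal,
      (∑' v : ↥S, g v.1) = ∑' q : Q, ∑' v : ↥(Cs q), g v.1 := by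
    intro g
    have h1 := (Equiv.sigmaFiberEquiv (Quot.mk r)).tsum_eq (fun x : ↥S => g x.1)
    rw [← h1, ENNReal.tsum_sigma']
    refine tsum_congr fun q => ?_
    let e : {x : ↥S // Quot.mk r x = q} ≃ ↥(Cs q) :=
      { toFun := fun x => ⟨x.1.1, x.1.2, x.2⟩
        invFun := fun v => ⟨⟨v.1, v.2.choose⟩, v.2.choose_spec⟩
        left_inv := fun x => Subtype.ext (Subtype.ext rfl)
        right_inv := fun v => rfl }
    refine Eq.trans ?_ (e.tsum_eq fun v : ↥(Cs q) => g v.1)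
    exact tsum_congr fun b => rfl
  have hWdec : G.WW S = ∑' q : Q, G.WW (Cs q) := decomp G.DD
  let B' : Set V → ENNReal := fun T => ∑' v : ↥T, ∑' u : ↥Sᶜ, G.ee v.1 u.1
  have hBS : G.BB S = B' S := ENNReal.tsum_prod'
  have hBdec : B' S = ∑' q : Q, B' (Cs q) := decomp fun v => ∑' u : ↥Sᶜ, G.ee v u.1
  have hBq : ∀ q : Q, G.BB (Cs q) = B' (Cs q) := by
    intro q
    rw [show G.BB (Cs q) = ∑' v : ↥(Cs q), ∑' u : ↥(Cs q)ᶜ, G.ee v.1 u.1 from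
      ENNReal.tsum_prod']
    refine tsum_congr fun v => ?_
    rw [tsum_subtype, tsum_subtype]
    refine tsum_congr fun u => ?_
    by_cases huS : u ∈ S
    · have hR : (Sᶜ).indicator (G.ee v.1) u = 0 :=
        Set.indicator_of_notMem (by simpa using huS) _
      rw [hR]
      by_cases huC : u ∈ (Cs q)ᶜ
      · rw [Set.indicator_of_mem huC]
        obtain ⟨hvS, hvq⟩ := v.2
        have hm : G.m v.1 u ≤ 0 := by
          by_contra hpos
          push_neg at hpos
          apply huC
          have h1 : Quot.mk r ⟨v.1, hvS⟩ = Quot.mk r ⟨u, huS⟩ :=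
            Quot.sound (Relation.ReflTransGen.single ⟨huS, hpos⟩)
          exact ⟨huS, h1.symm.trans hvq⟩
        show G.ee v.1 u = 0
        rw [ee, ENNReal.ofReal_eq_zero]
        exact hm
      · rw [Set.indicator_of_notMem huC]
    · have huSc : u ∈ Sᶜ := huS
      have huCc : u ∈ (Cs q)ᶜ := fun hu => huS (hCsub q hu)
      rw [Set.indicator_of_mem huCc, Set.indicator_of_mem huSc]
  have hQne : Nonempty Q := ⟨Quot.mk r ⟨hS.choose, hS.choose_spec⟩⟩
  have hex : ∃ q : Q, G.BB (Cs q) * G.WW S ≤ G.BB S * G.WW (Cs q) := by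
    by_contra hcon
    push_neg at hcon
    have hL : (∑' q : Q, G.BB S * G.WW (Cs q)) = G.BB S * G.WW S := by
      rw [ENNReal.tsum_mul_left, ← hWdec]
    have hR : (∑' q : Q, G.BB (Cs q) * G.WW S) = G.BB S * G.WW S := by
      have hsum : (∑' q : Q, G.BB (Cs q)) = G.BB S := by
        rw [hBS, hBdec]; exact tsum_congr fun q => hBq q
      rw [ENNReal.tsum_mul_right, hsum, mul_comm]
    have hfin : (∑' q : Q, G.BB S * G.WW (Cs q)) ≠ ⊤ := by
      rw [hL]; exact ENNReal.mul_ne_top (G.BB_ne_top S) (G.WW_ne_top S)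
    have hlt := ENNReal.tsum_lt_tsum hfin (fun q => (hcon q).le)
      (hcon (Classical.arbitrary Q))
    rw [hL, hR] at hlt
    exact lt_irrefl _ hlt
  obtain ⟨q, hq⟩ := hex
  refine ⟨Cs q, hCne q, ?_, ?_, ?_⟩
  · calc G.setWeight (Cs q) ≤ G.setWeight S := G.setWeight_mono (hCsub q)
      _ ≤ G.setWeight Sᶜ := hbal
      _ ≤ G.setWeight (Cs q)ᶜ := G.setWeight_mono (Set.compl_subset_compl.mpr (hCsub q))
  · have strengthen : ∀ {u v : V}, u ∈ Cs q → Relation.ReflTransGen stp u v →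
        v ∈ Cs q ∧ Relation.ReflTransGen (fun a b => b ∈ Cs q ∧ 0 < G.m a b) u v := by
      intro u v hu h
      induction h with
      | refl => exact ⟨hu, Relation.ReflTransGen.refl⟩
      | @tail b c h1 h2 ih =>
        obtain ⟨hb, hpath⟩ := ih
        obtain ⟨hbS, hbq⟩ := hb
        have hbc : r ⟨b, hbS⟩ ⟨c, h2.1⟩ := Relation.ReflTransGen.single ⟨h2.1, h2.2⟩
        have hc : c ∈ Cs q := ⟨h2.1, (Quot.sound hbc).symm.trans hbq⟩
        exact ⟨hc, hpath.tail ⟨hc, h2.2⟩⟩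
    intro u hu v hv
    obtain ⟨huS, huq⟩ := hu
    obtain ⟨hvS, hvq⟩ := hv
    have hmk : Quot.mk r ⟨u, huS⟩ = Quot.mk r ⟨v, hvS⟩ := huq.trans hvq.symm
    have hrr : r ⟨u, huS⟩ ⟨v, hvS⟩ := requiv.eqvGen_iff.mp (Quot.eqvGen_exact hmk)
    exact (strengthen ⟨huS, huq⟩ hrr).2
  · have hSpos := G.setWeight_pos hS
    have hCpos := G.setWeight_pos (hCne q)
    rw [div_le_div_iff₀ hCpos hSpos]
    have h1 : (G.BB (Cs q) * G.WW S).toReal ≤ (G.BB S * G.WW (Cs q)).toReal :=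
      ENNReal.toReal_mono (ENNReal.mul_ne_top (G.BB_ne_top S) (G.WW_ne_top _)) hq
    rw [ENNReal.toReal_mul, ENNReal.toReal_mul] at h1
    rw [boundaryWeight_eq_toReal, boundaryWeight_eq_toReal,
      setWeight_eq_toReal, setWeight_eq_toReal]
    exact h1

end SummableWeightedGraph

open SummableWeightedGraph in
/-- the Cheeger constant equals the infimum of the Cheeger ratios over
Cheeger sets, i.e. over sets inducing connected subgraphs. -/
theorem cheegerConst_eq_inf_over_connected {V : Type*} [Countable V] [Nonempty V]
    (G : SummableWeightedGraph V) :
    G.cheegerConst = sInf { r : ℝ | ∃ S : Set V, S.Nonempty ∧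
      G.setWeight S ≤ G.setWeight Sᶜ ∧ G.ConnectedIn S ∧
      r = G.boundaryWeight S / G.setWeight S } := by
  classical
  have hsub : { r : ℝ | ∃ S : Set V, S.Nonempty ∧
      G.setWeight S ≤ G.setWeight Sᶜ ∧ G.ConnectedIn S ∧
      r = G.boundaryWeight S / G.setWeight S } ⊆
      { r : ℝ | ∃ S : Set V, S.Nonempty ∧ G.setWeight S ≤ G.setWeight Sᶜ ∧
      r = G.boundaryWeight S / G.setWeight S } := by
    rintro r ⟨S, h1, h2, _, h4⟩
    exact ⟨S, h1, h2, h4⟩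
  have hbddA : ∀ r ∈ { r : ℝ | ∃ S : Set V, S.Nonempty ∧
      G.setWeight S ≤ G.setWeight Sᶜ ∧ r = G.boundaryWeight S / G.setWeight S },
      (0 : ℝ) ≤ r := by
    rintro r ⟨S, _, _, rfl⟩
    exact div_nonneg (G.boundaryWeight_nonneg S) (G.setWeight_nonneg S)
  rw [cheegerConst]
  rcases Set.eq_empty_or_nonempty { r : ℝ | ∃ S : Set V, S.Nonempty ∧
      G.setWeight S ≤ G.setWeight Sᶜ ∧ r = G.boundaryWeight S / G.setWeight S }
      with hAe | hAne
  · rw [hAe] at hsub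
    rw [hAe, Set.subset_empty_iff.mp hsub]
  · have hBne : { r : ℝ | ∃ S : Set V, S.Nonempty ∧
        G.setWeight S ≤ G.setWeight Sᶜ ∧ G.ConnectedIn S ∧
        r = G.boundaryWeight S / G.setWeight S }.Nonempty := by
      obtain ⟨r, S, h1, h2, _⟩ := hAne
      obtain ⟨C, hC1, hC2, hC3, _⟩ := G.exists_connected_le S h1 h2
      exact ⟨_, C, hC1, hC2, hC3, rfl⟩
    refine le_antisymm (csInf_le_csInf ⟨0, hbddA⟩ hBne hsub) ?_
    refine le_csInf hAne ?_
    rintro r ⟨S, h1, h2, rfl⟩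
    obtain ⟨C, hC1, hC2, hC3, hC4⟩ := G.exists_connected_le S h1 h2
    refine le_trans (csInf_le ⟨0, ?_⟩ ⟨C, hC1, hC2, hC3, rfl⟩) hC4
    exact fun x hx => hbddA x (hsub hx)
end
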